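/- Let c_γ > 0 and let φ : [0,1) → (0,∞) be a continuous blow-up function with lim_{t→1⁻} φ(t) = ∞ and ∫₀¹ φ(s) ds = ∞. Let 𝒯 : [0,1] → ℝ^d be continuous, and let g_1, …, g_{N_g}, h_1, …, h_{N_h} : ℝ^d → ℝ be differentiable with g := Σ_{i=1}^{N_g} g_i², such that g(𝒯(·)) and each h_j(𝒯(·)) are differentiable on [0,1). Let ḡ, h̄_1, …, h̄_{N_h} : [0,1] → ℝ be continuous, differentiable on [0,1), with ḡ(1) = 0 and h̄_j(1) = 0 for all j. Let δ_g, δ_{h,1}, …, δ_{h,N_h} : [0,1) → ℝ be slack functions bounded above by constants δ̄_g, δ̄_{h,j} > 0, and let γ : ℝ → ℝ satisfy, along the trajectory, γ(ḡ(t) − g(𝒯(t))) ≤ c_γ φ(t) (ḡ(t) − g(𝒯(t))) and γ(h̄_j(t) − h_j(𝒯(t))) ≤ c_γ φ(t) (h̄_j(t) − h_j(𝒯(t))) for all t ∈ [0,1) and all j. If for all t ∈ [0,1), (d/dt) g(𝒯(t)) ≤ γ(ḡ(t) − g(𝒯(t))) + ḡ'(t) + δ_g(t) and (d/dt) h_j(𝒯(t))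 ≤ γ(h̄_j(t) − h_j(𝒯(t))) + h̄_j'(t) + δ_{h,j}(t) for all j, then g_i(𝒯(1)) = 0 for all i = 1, …, N_g and h_j(𝒯(1)) ≤ 0 for all j = 1, …, N_h. -/

import Mathlib

open Set Filter MeasureTheory intervalIntegral

/-- Scalar comparison lemma: if `e' ≤ -(c φ) e + δ` on `[0,1)` with `φ` continuous,
positive, blowing up at `1` and with divergent integral, then `e 1 ≤ 0`. -/
private lemma slack_scalar (c : ℝ) (hc : 0 < c)
    (φ : ℝ → ℝ)
    (hφcont : ContinuousOn φ (Set.Ico 0 1))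
    (hφpos : ∀ t ∈ Set.Ico (0:ℝ) 1, 0 < φ t)
    (hφblow : Tendsto φ (nhdsWithin 1 (Set.Iio 1)) atTop)
    (hφdiv : Tendsto (fun t => ∫ s in (0:ℝ)..t, φ s) (nhdsWithin 1 (Set.Iio 1)) atTop)
    (e : ℝ → ℝ) (hecont : ContinuousOn e (Set.Icc 0 1))
    (De : ℝ → ℝ)
    (hDe : ∀ t ∈ Set.Ico (0:ℝ) 1, HasDerivWithinAt e (De t) (Set.Ico 0 1) t)
    (δ : ℝ)
    (hineq : ∀ t ∈ Set.Ico (0:ℝ) 1, De t ≤ -(c * φ t) * e t + δ) :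
    e 1 ≤ 0 := by
  have hDA : ∀ t ∈ Set.Ioo (0:ℝ) 1, HasDerivAt e (De t) t := fun t ht =>
    (hDe t ⟨ht.1.le, ht.2⟩).hasDerivAt (Ico_mem_nhds ht.1 ht.2)
  have hφct : ∀ t ∈ Set.Ioo (0:ℝ) 1, ContinuousAt φ t := fun t ht =>
    hφcont.continuousAt (Ico_mem_nhds ht.1 ht.2)
  have hint : ∀ a ∈ Set.Ico (0:ℝ) 1, ∀ b ∈ Set.Ico (0:ℝ) 1,
      IntervalIntegrable φ volume a b := by
    intro a ha b hb
    apply ContinuousOn.intervalIntegrable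
    apply hφcont.mono
    intro x hx
    rcases le_total a b with hab | hab
    · rw [uIcc_of_le hab] at hx
      exact ⟨le_trans ha.1 hx.1, lt_of_le_of_lt hx.2 hb.2⟩
    · rw [uIcc_of_ge hab] at hx
      exact ⟨le_trans hb.1 hx.1, lt_of_le_of_lt hx.2 ha.2⟩
  have hsmf : ∀ t ∈ Set.Ioo (0:ℝ) 1, StronglyMeasurableAtFilter φ (nhds t) volume :=
    ContinuousOn.stronglyMeasurableAtFilter isOpen_Ioo (hφcont.mono Ioo_subset_Ico_self)
  have key : ∀ ε : ℝ, 0 < ε → e 1 ≤ ε := by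
    intro ε hε
    -- Step 1: find `a₁ ∈ (0,1)` with `φ ≥ δ/(cε)` on `[a₁, 1)`
    have h1 : {t | δ / (c * ε) ≤ φ t} ∈ nhdsWithin 1 (Set.Iio 1) :=
      hφblow.eventually (eventually_ge_atTop _)
    rw [mem_nhdsLT_iff_exists_Ioo_subset' (show (0:ℝ) < 1 by norm_num)] at h1
    obtain ⟨l, hl, hIoo⟩ := h1
    have hl' : l < 1 := hl
    set a : ℝ := max l 0 with ha_def
    have ha0 : 0 ≤ a := le_max_right _ _
    have ha1 : a < 1 := max_lt hl' one_pos
    set a₁ : ℝ := (a + 1) / 2 with ha₁_def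
    have ha₁0 : 0 < a₁ := by rw [ha₁_def]; linarith
    have ha₁1 : a₁ < 1 := by rw [ha₁_def]; linarith
    have ha₁a : a < a₁ := by rw [ha₁_def]; linarith
    have hφlb : ∀ t ∈ Set.Ico a₁ 1, δ / (c * ε) ≤ φ t := fun t ht =>
      hIoo ⟨lt_of_le_of_lt (le_max_left l 0) (lt_of_lt_of_le ha₁a ht.1), ht.2⟩
    have ha₁Ico : a₁ ∈ Set.Ico (0:ℝ) 1 := ⟨ha₁0.le, ha₁1⟩
    -- Step 2: there exists `t₁ ∈ [a₁,1)` with `e t₁ ≤ ε`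
    have step2 : ∃ t₁ ∈ Set.Ico a₁ 1, e t₁ ≤ ε := by
      by_contra hcon
      push_neg at hcon
      set Φ : ℝ → ℝ := fun t => ∫ s in a₁..t, φ s with hΦdef
      have hΦd : ∀ t ∈ Set.Ioo (0:ℝ) 1, HasDerivAt Φ (φ t) t := fun t ht =>
        integral_hasDerivAt_right (hint a₁ ha₁Ico t ⟨ht.1.le, ht.2⟩) (hsmf t ht) (hφct t ht)
      set ψ : ℝ → ℝ := fun t => e t + c * ε * Φ t - δ * (t - a₁) with hψdef
      have hψd : ∀ t ∈ Set.Ioo (0:ℝ) 1, HasDerivAt ψ (De t + c * ε * φ t - δ) t := by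
        intro t ht
        have h2 : HasDerivAt (fun u : ℝ => δ * (u - a₁)) δ t := by
          simpa using ((hasDerivAt_id t).sub_const a₁).const_mul δ
        exact ((hDA t ht).add ((hΦd t ht).const_mul (c * ε))).sub h2
      have hbound : ∀ b ∈ Set.Ioo a₁ 1, e b ≤ e a₁ - c * ε * Φ b + δ * (b - a₁) := by
        intro b hb
        have hss : Set.Icc a₁ b ⊆ Set.Ioo (0:ℝ) 1 := fun x hx =>
          ⟨lt_of_lt_of_le ha₁0 hx.1, lt_of_le_of_lt hx.2 hb.2⟩
        have hmono : AntitoneOn ψ (Set.Icc a₁ b) := by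
          apply antitoneOn_of_deriv_nonpos (convex_Icc _ _)
          · exact continuousOn_of_forall_continuousAt
              (fun x hx => (hψd x (hss hx)).continuousAt)
          · intro x hx
            rw [interior_Icc] at hx
            exact (hψd x (hss (Ioo_subset_Icc_self hx))).differentiableAt.differentiableWithinAt
          · intro x hx
            rw [interior_Icc] at hx
            have hx' := hss (Ioo_subset_Icc_self hx)
            rw [(hψd x hx').deriv]
            have hxI : x ∈ Set.Ico (0:ℝ) 1 := ⟨hx'.1.le, hx'.2⟩
            have h3 := hineq x hxI
            have h4 : ε < e x := hcon x ⟨hx.1.le, hx'.2⟩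
            have h5 : 0 < φ x := hφpos x hxI
            nlinarith [mul_nonneg (mul_pos hc h5).le (sub_pos.2 h4).le]
        have hψa : ψ a₁ = e a₁ := by
          simp [hψdef, hΦdef, intervalIntegral.integral_same]
        have h6 := hmono (left_mem_Icc.2 hb.1.le) (right_mem_Icc.2 hb.1.le) hb.1.le
        rw [hψa] at h6
        simp only [hψdef] at h6
        linarith
      -- split the integral
      have hΦeq : ∀ b ∈ Set.Ioo a₁ 1,
          Φ b = (∫ s in (0:ℝ)..b, φ s) - ∫ s in (0:ℝ)..a₁, φ s := by
        intro b hb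
        have hadd := integral_add_adjacent_intervals
          (hint 0 ⟨le_refl 0, one_pos⟩ a₁ ha₁Ico)
          (hint a₁ ha₁Ico b ⟨(ha₁0.trans hb.1).le, hb.2⟩)
        simp only [hΦdef]
        linarith
      -- derive a contradiction using divergence of the integral
      set C : ℝ := e a₁ + c * ε * (∫ s in (0:ℝ)..a₁, φ s) + |δ| with hCdef
      have hev1 : ∀ᶠ b in nhdsWithin 1 (Set.Iio 1), a₁ < b :=
        eventually_nhdsWithin_of_eventually_nhds (eventually_gt_nhds ha₁1)
      have hev2 : ∀ᶠ b in nhdsWithin (1:ℝ) (Set.Iio (1:ℝ)), b ∈ Set.Iio (1:ℝ) :=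
        eventually_mem_nhdsWithin
      have hev3 : ∀ᶠ b in nhdsWithin 1 (Set.Iio 1),
          (C - ε + 1) / (c * ε) ≤ ∫ s in (0:ℝ)..b, φ s :=
        hφdiv.eventually (eventually_ge_atTop _)
      obtain ⟨b, hb1, hb2, hb3⟩ := (hev1.and (hev2.and hev3)).exists
      have hbIoo : b ∈ Set.Ioo a₁ 1 := ⟨hb1, hb2⟩
      have hb4 := hbound b hbIoo
      rw [hΦeq b hbIoo] at hb4
      have hb5 : ε < e b := hcon b ⟨hb1.le, hbIoo.2⟩
      have hb6 : δ * (b - a₁) ≤ |δ| := by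
        calc δ * (b - a₁) ≤ |δ| * (b - a₁) := by
              apply mul_le_mul_of_nonneg_right (le_abs_self δ)
              linarith
          _ ≤ |δ| * 1 := by
              apply mul_le_mul_of_nonneg_left _ (abs_nonneg δ)
              linarith [hbIoo.2, ha₁0]
          _ = |δ| := mul_one _
      have hb7 : C - ε + 1 ≤ c * ε * (∫ s in (0:ℝ)..b, φ s) := by
        rw [div_le_iff₀ (mul_pos hc hε)] at hb3
        linarith [hb3]
      rw [hCdef] at hb7
      linarith
    obtain ⟨t₁, ht₁, het₁⟩ := step2
    -- Step 3: `e ≤ ε` on `[t₁, 1)`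
    have step3 : ∀ t ∈ Set.Ico t₁ 1, e t ≤ ε := by
      intro t₂ ht₂
      by_contra hcon
      push_neg at hcon
      have ht₁t₂ : t₁ < t₂ := lt_of_le_of_ne ht₂.1 (fun hq => by rw [← hq] at hcon; linarith)
      set S : Set ℝ := {t ∈ Set.Icc t₁ t₂ | e t ≤ ε} with hSdef
      have hSne : S.Nonempty := ⟨t₁, ⟨left_mem_Icc.2 ht₁t₂.le, het₁⟩⟩
      have hSbdd : BddAbove S := ⟨t₂, fun x hx => hx.1.2⟩
      have hIccsub : Set.Icc t₁ t₂ ⊆ Set.Icc (0:ℝ) 1 := fun x hx =>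
        ⟨le_trans (le_trans ha₁0.le ht₁.1) hx.1, le_trans hx.2 ht₂.2.le⟩
      have hSclosed : IsClosed S := by
        have hSe : S = Set.Icc t₁ t₂ ∩ e ⁻¹' Set.Iic ε := by
          ext x; simp [hSdef, Set.mem_sep_iff, and_comm]
        rw [hSe]
        exact (hecont.mono hIccsub).preimage_isClosed_of_isClosed isClosed_Icc isClosed_Iic
      set s := sSup S with hsdef
      have hsS : s ∈ S := hSclosed.csSup_mem hSne hSbdd
      have hst₂ : s < t₂ := lt_of_le_of_ne hsS.1.2 (fun hq => by rw [hq] at hsS; linarith [hsS.2])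
      have hgt : ∀ u ∈ Set.Ioc s t₂, ε < e u := by
        intro u hu
        by_contra h'
        push_neg at h'
        have huS : u ∈ S := ⟨⟨le_trans hsS.1.1 hu.1.le, hu.2⟩, h'⟩
        exact absurd (le_csSup hSbdd huS) (not_le.2 hu.1)
      have hssub : Set.Icc s t₂ ⊆ Set.Ioo (0:ℝ) 1 := fun x hx =>
        ⟨lt_of_lt_of_le (lt_of_lt_of_le ha₁0 ht₁.1) (le_trans hsS.1.1 hx.1),
          lt_of_le_of_lt hx.2 ht₂.2⟩
      have hanti : AntitoneOn e (Set.Icc s t₂) := by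
        apply antitoneOn_of_deriv_nonpos (convex_Icc _ _)
        · exact hecont.mono (fun x hx => ⟨(hssub hx).1.le, (hssub hx).2.le⟩)
        · intro x hx
          rw [interior_Icc] at hx
          exact (hDA x (hssub (Ioo_subset_Icc_self hx))).differentiableAt.differentiableWithinAt
        · intro x hx
          rw [interior_Icc] at hx
          have hx' := hssub (Ioo_subset_Icc_self hx)
          rw [(hDA x hx').deriv]
          have hxI : x ∈ Set.Ico (0:ℝ) 1 := ⟨hx'.1.le, hx'.2⟩
          have h3 := hineq x hxI
          have h4 : ε < e x := hgt x ⟨hx.1, hx.2.le⟩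
          have h5 : 0 < φ x := hφpos x hxI
          have h6 : δ / (c * ε) ≤ φ x :=
            hφlb x ⟨le_trans ht₁.1 (le_trans hsS.1.1 hx.1.le), hx'.2⟩
          have h7 : δ ≤ c * ε * φ x := by
            rw [div_le_iff₀ (mul_pos hc hε)] at h6
            nlinarith
          nlinarith [mul_nonneg (mul_pos hc h5).le (sub_pos.2 h4).le]
      have h8 := hanti (left_mem_Icc.2 hst₂.le) (right_mem_Icc.2 hst₂.le) hst₂.le
      linarith [hsS.2]
    -- Step 4: pass to the limit `t → 1⁻`
    have ht₁1 : t₁ < 1 := ht₁.2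
    have hne : (nhdsWithin 1 (Set.Ico t₁ 1)).NeBot := by
      apply mem_closure_iff_nhdsWithin_neBot.1
      rw [closure_Ico ht₁1.ne]
      exact ⟨ht₁1.le, le_refl 1⟩
    have hsub : Set.Ico t₁ 1 ⊆ Set.Icc (0:ℝ) 1 := fun x hx =>
      ⟨le_trans (le_trans ha₁0.le ht₁.1) hx.1, hx.2.le⟩
    have htend : Tendsto e (nhdsWithin 1 (Set.Ico t₁ 1)) (nhds (e 1)) :=
      (hecont 1 (right_mem_Icc.2 zero_le_one)).tendsto.mono_left (nhdsWithin_mono 1 hsub)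
    exact le_of_tendsto htend (eventually_mem_nhdsWithin.mono (fun x hx => step3 x hx))
  by_contra hpos
  push_neg at hpos
  linarith [key (e 1 / 2) (by linarith)]

/-- Theorem 4 (certification under bounded slack with a blow-up gain): despite
bounded slack terms `δ` in the guidance differential inequalities, if the gain
function `γ` is dominated along the trajectory by the blow-up gain `c_γ · φ t`,
where `φ > 0` is continuous on `[0,1)` with `φ t → ∞` and `∫₀¹ φ = ∞`, then all
equality constraints `g i (traj 1) = 0` and inequality constraints
`h j (traj 1) ≤ 0` hold at the terminal time `t = 1`. -/
theorem certification_under_bounded_slack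
    {d Ng Nh : ℕ}
    (c_γ : ℝ) (hcγ : 0 < c_γ)
    (φ : ℝ → ℝ)
    (hφcont : ContinuousOn φ (Set.Ico 0 1))
    (hφpos : ∀ t ∈ Set.Ico (0:ℝ) 1, 0 < φ t)
    (hφblow : Tendsto φ (nhdsWithin 1 (Set.Iio 1)) atTop)
    (hφdiv : Tendsto (fun t => ∫ s in (0:ℝ)..t, φ s) (nhdsWithin 1 (Set.Iio 1)) atTop)
    (traj : ℝ → EuclideanSpace ℝ (Fin d))
    (htraj : ContinuousOn traj (Set.Icc 0 1))
    (g : Fin Ng → EuclideanSpace ℝ (Fin d) → ℝ) (hg : ∀ i, Differentiable ℝ (g i))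
    (h : Fin Nh → EuclideanSpace ℝ (Fin d) → ℝ) (hh : ∀ j, Differentiable ℝ (h j))
    (G : EuclideanSpace ℝ (Fin d) → ℝ) (hG : ∀ x, G x = ∑ i, (g i x) ^ 2)
    (DG : ℝ → ℝ) (Dh : Fin Nh → ℝ → ℝ)
    (hDG : ∀ t ∈ Set.Ico (0:ℝ) 1,
      HasDerivWithinAt (fun s => G (traj s)) (DG t) (Set.Ico 0 1) t)
    (hDh : ∀ j, ∀ t ∈ Set.Ico (0:ℝ) 1,
      HasDerivWithinAt (fun s => h j (traj s)) (Dh j t) (Set.Ico 0 1) t)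
    (gbar : ℝ → ℝ) (hbar : Fin Nh → ℝ → ℝ)
    (hgbarcont : ContinuousOn gbar (Set.Icc 0 1))
    (hhbarcont : ∀ j, ContinuousOn (hbar j) (Set.Icc 0 1))
    (hgbardiff : DifferentiableOn ℝ gbar (Set.Ico 0 1))
    (hhbardiff : ∀ j, DifferentiableOn ℝ (hbar j) (Set.Ico 0 1))
    (hgbar1 : gbar 1 = 0) (hhbar1 : ∀ j, hbar j 1 = 0)
    (δg : ℝ → ℝ) (δh : Fin Nh → ℝ → ℝ)
    (δgbar : ℝ) (δhbar : Fin Nh → ℝ)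
    (hδgbar : 0 < δgbar) (hδhbar : ∀ j, 0 < δhbar j)
    (hδg : ∀ t ∈ Set.Ico (0:ℝ) 1, δg t ≤ δgbar)
    (hδh : ∀ j, ∀ t ∈ Set.Ico (0:ℝ) 1, δh j t ≤ δhbar j)
    (γ : ℝ → ℝ)
    (hγdom_g : ∀ t ∈ Set.Ico (0:ℝ) 1,
      γ (gbar t - G (traj t)) ≤ c_γ * φ t * (gbar t - G (traj t)))
    (hγdom_h : ∀ j, ∀ t ∈ Set.Ico (0:ℝ) 1,
      γ (hbar j t - h j (traj t)) ≤ c_γ * φ t * (hbar j t - h j (traj t)))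
    (hineq_g : ∀ t ∈ Set.Ico (0:ℝ) 1,
      DG t ≤ γ (gbar t - G (traj t)) + derivWithin gbar (Set.Ico 0 1) t + δg t)
    (hineq_h : ∀ j, ∀ t ∈ Set.Ico (0:ℝ) 1,
      Dh j t ≤ γ (hbar j t - h j (traj t)) + derivWithin (hbar j) (Set.Ico 0 1) t + δh j t) :
    (∀ i, g i (traj 1) = 0) ∧ ∀ j, h j (traj 1) ≤ 0 := by
  have hGc : Continuous G := by
    have hGe : G = fun x => ∑ i, (g i x) ^ 2 := funext hG
    rw [hGe]
    exact continuous_finset_sum _ (fun i _ => ((hg i).continuous.pow 2))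
  -- equality constraints
  have hgfinal : G (traj 1) ≤ 0 := by
    have he1 : (fun t => G (traj t) - gbar t) 1 ≤ 0 := by
      apply slack_scalar c_γ hcγ φ hφcont hφpos hφblow hφdiv
        (fun t => G (traj t) - gbar t)
        ((hGc.comp_continuousOn htraj).sub hgbarcont)
        (fun t => DG t - derivWithin gbar (Set.Ico 0 1) t)
        (fun t ht => (hDG t ht).sub (hgbardiff t ht).hasDerivWithinAt)
        δgbar
      intro t ht
      have h1 := hineq_g t ht
      have h2 := hγdom_g t ht
      have h3 := hδg t ht
      nlinarith [h1, h2, h3]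
    simpa [hgbar1] using he1
  constructor
  · intro i
    have hsum : ∑ i, (g i (traj 1)) ^ 2 = 0 :=
      le_antisymm (by rw [← hG]; exact hgfinal)
        (Finset.sum_nonneg fun i _ => sq_nonneg _)
    have hzero := (Finset.sum_eq_zero_iff_of_nonneg
      (fun i _ => sq_nonneg (g i (traj 1)))).1 hsum i (Finset.mem_univ i)
    exact pow_eq_zero_iff two_ne_zero |>.1 hzero
  · intro j
    have he1 : (fun t => h j (traj t) - hbar j t) 1 ≤ 0 := by
      apply slack_scalar c_γ hcγ φ hφcont hφpos hφblow hφdiv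
        (fun t => h j (traj t) - hbar j t)
        (((hh j).continuous.comp_continuousOn htraj).sub (hhbarcont j))
        (fun t => Dh j t - derivWithin (hbar j) (Set.Ico 0 1) t)
        (fun t ht => (hDh j t ht).sub ((hhbardiff j) t ht).hasDerivWithinAt)
        (δhbar j)
      intro t ht
      have h1 := hineq_h j t ht
      have h2 := hγdom_h j t ht
      have h3 := hδh j t ht
      nlinarith [h1, h2, h3]
    simpa [hhbar1 j] using he1
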